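/- For the memory-1 stationary algorithm with parameters (δ, α_eff, q₀) and λ_max > 0, the companion recurrence matrix S_λ is strictly stable (spectral radius < 1) simultaneously for all 0 < λ ≤ λ_max if and only if: 0 < δ < 2, α_eff > 0, −q₀ < δ/λ_max, and δ α_eff < (4 − 2δ)/λ_max − 2q₀. -/

import Mathlib

/-- Jury criterion, sufficiency: all complex roots of `x² + bx + c` lie in the open unit disk. -/
lemma quad_abs_lt (b c : ℝ) (hc : |c| < 1) (h1 : 0 < 1 + b + c) (h2 : 0 < 1 - b + c)
    (x : ℂ) (hx : x ^ 2 + (b : ℂ) * x + (c : ℂ) = 0) : ‖x‖ < 1 := by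
  obtain ⟨hc1, hc2⟩ := abs_lt.mp hc
  set a := x.re with ha
  set t := x.im with ht
  have hre : a ^ 2 - t ^ 2 + b * a + c = 0 := by
    have := congrArg Complex.re hx
    simp [pow_two, Complex.mul_re, Complex.add_re] at this
    nlinarith [this]
  have him : t * (2 * a + b) = 0 := by
    have := congrArg Complex.im hx
    simp [pow_two, Complex.mul_im, Complex.add_im] at this
    nlinarith [this]
  have hns : a ^ 2 + t ^ 2 < 1 := by
    rcases eq_or_ne t 0 with h0 | h0
    · have hq : a ^ 2 + b * a + c = 0 := by nlinarith [hre, sq_nonneg t, h0]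
      have halt : a < 1 := by nlinarith [hq]
      have hagt : -1 < a := by nlinarith [hq]
      nlinarith [halt, hagt, h0]
    · have hb : 2 * a + b = 0 := by
        rcases mul_eq_zero.mp him with h | h
        · exact absurd h h0
        · exact h
      have : c = a ^ 2 + t ^ 2 := by nlinarith [hre, hb]
      linarith
  have hsq : ‖x‖ ^ 2 = a ^ 2 + t ^ 2 := by
    rw [Complex.sq_norm, Complex.normSq_apply]; ring
  nlinarith [norm_nonneg x, hsq, hns]

/-- Jury criterion, necessity. -/
lemma quad_conditions (b c : ℝ)
    (h : ∀ x : ℂ, x ^ 2 + (b : ℂ) * x + (c : ℂ) = 0 → ‖x‖ < 1) :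
    |c| < 1 ∧ 0 < 1 + b + c ∧ 0 < 1 - b + c := by
  rcases le_or_gt (4 * c) (b ^ 2) with hD | hD
  · -- real roots
    set s := Real.sqrt (b ^ 2 - 4 * c) with hs
    have hs2 : s ^ 2 = b ^ 2 - 4 * c := Real.sq_sqrt (by linarith)
    set r₁ := (-b + s) / 2 with hr1
    set r₂ := (-b - s) / 2 with hr2
    have hq1 : r₁ ^ 2 + b * r₁ + c = 0 := by rw [hr1]; nlinarith [hs2]
    have hq2 : r₂ ^ 2 + b * r₂ + c = 0 := by rw [hr2]; nlinarith [hs2]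
    have ha1 : |r₁| < 1 := by
      have := h (r₁ : ℂ) (by exact_mod_cast congrArg (Complex.ofReal) hq1)
      rwa [Complex.norm_real, Real.norm_eq_abs] at this
    have ha2 : |r₂| < 1 := by
      have := h (r₂ : ℂ) (by exact_mod_cast congrArg (Complex.ofReal) hq2)
      rwa [Complex.norm_real, Real.norm_eq_abs] at this
    obtain ⟨h1a, h1b⟩ := abs_lt.mp ha1
    obtain ⟨h2a, h2b⟩ := abs_lt.mp ha2
    have hsum : r₁ + r₂ = -b := by rw [hr1, hr2]; ring
    have hprod : r₁ * r₂ = c := by rw [hr1, hr2]; nlinarith [hs2]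
    refine ⟨abs_lt.mpr ⟨?_, ?_⟩, ?_, ?_⟩
    · nlinarith
    · nlinarith
    · nlinarith [mul_pos (by linarith : (0:ℝ) < 1 - r₁) (by linarith : (0:ℝ) < 1 - r₂)]
    · nlinarith [mul_pos (by linarith : (0:ℝ) < 1 + r₁) (by linarith : (0:ℝ) < 1 + r₂)]
  · -- complex conjugate roots
    set t := Real.sqrt (4 * c - b ^ 2) with hts
    have ht2 : t ^ 2 = 4 * c - b ^ 2 := Real.sq_sqrt (by linarith)
    set x : ℂ := (-b / 2 : ℝ) + (t / 2 : ℝ) * Complex.I with hxdef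
    have hx : x ^ 2 + (b : ℂ) * x + (c : ℂ) = 0 := by
      have htC : (t : ℂ) ^ 2 = 4 * (c : ℂ) - (b : ℂ) ^ 2 := by
        exact_mod_cast congrArg Complex.ofReal ht2
      have hI : (Complex.I) ^ 2 = -1 := Complex.I_sq
      rw [hxdef]
      push_cast
      linear_combination ((t : ℂ) ^ 2 / 4) * hI - (1 / 4 : ℂ) * htC
    have habs := h x hx
    have hnsq : Complex.normSq x = c := by
      rw [hxdef]
      simp [Complex.normSq_apply]
      nlinarith [ht2]
    have hxabs : ‖x‖ ^ 2 = c := by rw [Complex.sq_norm, hnsq]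
    have hc0 : 0 ≤ c := by nlinarith [sq_nonneg b]
    have hc1 : c < 1 := by nlinarith [norm_nonneg x]
    refine ⟨abs_lt.mpr ⟨by linarith, hc1⟩, ?_, ?_⟩
    · nlinarith [sq_nonneg (1 + b / 2)]
    · nlinarith [sq_nonneg (1 - b / 2)]

/-- Memory-1 stability criterion: with `q₁ = −q₀ − δ α_eff`, the step matrix `S_λ`
(whose eigenvalues are the roots of `(x−1)(x−1+δ) − λ(q₁x+q₀)`), together with
`D = 1 − δ`, is strictly stable simultaneously for all `0 < λ ≤ λ_max` if and only if
`0 < δ < 2`, `α_eff > 0`, `−q₀ < δ/λ_max`, and `δ α_eff < (4−2δ)/λ_max − 2q₀`. -/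
theorem stmt_18 (δ αeff q₀ lammax : ℝ) (hlam : 0 < lammax) :
    ((|1 - δ| < 1) ∧
      ∀ lam : ℝ, 0 < lam → lam ≤ lammax → ∀ x : ℂ,
        (x - 1) * (x - 1 + (δ : ℂ))
            - (lam : ℂ) * (((-q₀ - δ * αeff : ℝ) : ℂ) * x + (q₀ : ℂ)) = 0 →
        ‖x‖ < 1)
    ↔ (0 < δ ∧ δ < 2 ∧ 0 < αeff ∧ -q₀ < δ / lammax
        ∧ δ * αeff < (4 - 2 * δ) / lammax - 2 * q₀) := by 
  constructor
  · rintro ⟨habs, hroots⟩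
    obtain ⟨hd1, hd2⟩ := abs_lt.mp habs
    have hδ : 0 < δ := by linarith
    have hδ2 : δ < 2 := by linarith
    obtain ⟨hC, hJ1, hJ2⟩ := quad_conditions (δ - 2 - lammax * (-q₀ - δ * αeff))
        (1 - δ - lammax * q₀) (by
      intro x hx
      apply hroots lammax hlam le_rfl x
      push_cast at hx ⊢
      linear_combination hx)
    obtain ⟨hCa, hCb⟩ := abs_lt.mp hC
    have hαpos : 0 < αeff := by
      have hx : 0 < lammax * (δ * αeff) := by nlinarith [hJ1]
      by_contra hcon
      push_neg at hcon
      nlinarith [mul_pos hlam hδ]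
    refine ⟨hδ, hδ2, hαpos, ?_, ?_⟩
    · rw [lt_div_iff₀ hlam]; nlinarith [hCa]
    · have key : lammax * (δ * αeff + 2 * q₀) < 4 - 2 * δ := by nlinarith [hJ2]
      have : δ * αeff + 2 * q₀ < (4 - 2 * δ) / lammax := by
        rw [lt_div_iff₀ hlam]; nlinarith [key]
      linarith
  · rintro ⟨h1, h2, h3, h4, h5⟩
    have h4' : -q₀ * lammax < δ := by
      have := (lt_div_iff₀ hlam).mp h4; linarith [this]
    have h5' : lammax * (δ * αeff + 2 * q₀) < 4 - 2 * δ := by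
      have h5a : δ * αeff + 2 * q₀ < (4 - 2 * δ) / lammax := by linarith
      have := (lt_div_iff₀ hlam).mp h5a; linarith [this]
    refine ⟨abs_lt.mpr ⟨by linarith, by linarith⟩, ?_⟩
    intro lam hl1 hl2 x hx
    have hδα : 0 < δ * αeff := mul_pos h1 h3
    apply quad_abs_lt (δ - 2 - lam * (-q₀ - δ * αeff)) (1 - δ - lam * q₀) ?_ ?_ ?_ x ?_
    · rw [abs_lt]
      constructor
      · -- -1 < 1 - δ - lam*q₀  ⟺  lam*q₀ < 2 - δ
        rcases le_or_gt q₀ 0 with hq | hq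
        · nlinarith [mul_nonpos_of_nonneg_of_nonpos hl1.le hq]
        · nlinarith [mul_le_mul_of_nonneg_right hl2 hq.le]
      · -- 1 - δ - lam*q₀ < 1  ⟺  -δ < lam*q₀
        rcases le_or_gt q₀ 0 with hq | hq
        · nlinarith [mul_le_mul_of_nonpos_right hl2 hq]
        · nlinarith [mul_pos hl1 hq]
    · nlinarith [mul_pos hl1 hδα]
    · rcases le_or_gt (δ * αeff + 2 * q₀) 0 with ht | ht
      · nlinarith [mul_nonpos_of_nonneg_of_nonpos hl1.le ht]
      · nlinarith [mul_le_mul_of_nonneg_right hl2 ht.le]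
    · push_cast at hx ⊢
      linear_combination hx
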